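/- Let s > 1 be non-integer, let 𝔟 = 1 − 2(s − ⌊s⌋), and let m be an integer with 1 ≤ m ≤ ⌊s⌋. Then for every y > 0, ((D_𝔟 + 1)^{m} ψ_s)(y) = (⌊s⌋!/⌊s−m⌋!) · (Γ(s−m)/Γ(s)) · ψ_{s−m}(y). -/

import Mathlib

open MeasureTheory Real Filter Set

/-- The modified Bessel function of the second kind, for `y > 0` given by
`K_s(y) = ∫_0^∞ e^{−y·cosh t}·cosh(s·t) dt`. -/
noncomputable def besselK (s y : ℝ) : ℝ :=
  ∫ t in Set.Ioi (0 : ℝ), Real.exp (-(y * Real.cosh t)) * Real.cosh (s * t)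

/-- `ψ_s(y) = (2^{1−s}/Γ(s))·|y|^s·K_s(|y|)` for `y ≠ 0`, and `ψ_s(0) = 1`. -/
noncomputable def psi (s : ℝ) (y : ℝ) : ℝ :=
  if y = 0 then 1
  else (2 : ℝ) ^ (1 - s) / Real.Gamma s * |y| ^ s * besselK s |y|

/-- The operator `f ↦ D_b f + λ·f`, where `(D_b f)(y) = −f''(y) − (b/y)·f'(y)`. -/
noncomputable def DLam (b lam : ℝ) (f : ℝ → ℝ) : ℝ → ℝ :=
  fun y => -(deriv (deriv f) y) - b / y * deriv f y + lam * f y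

/-- The `n`-fold iterate `(D_b + λ)^n f`, computed pointwise. -/
noncomputable def DLamIter (b lam : ℝ) (n : ℕ) (f : ℝ → ℝ) : ℝ → ℝ :=
  (DLam b lam)^[n] f


open Topology


lemma aux_cosh_le (x : ℝ) : Real.cosh x ≤ Real.exp |x| := by
  rw [Real.cosh_eq]
  have h1 : Real.exp x ≤ Real.exp |x| := Real.exp_le_exp.2 (le_abs_self x)
  have h2 : Real.exp (-x) ≤ Real.exp |x| := Real.exp_le_exp.2 (neg_le_abs x)
  linarith

lemma aux_sinh_le (x : ℝ) : |Real.sinh x| ≤ Real.exp |x| := by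
  rw [Real.sinh_eq]
  have h1 : Real.exp x ≤ Real.exp |x| := Real.exp_le_exp.2 (le_abs_self x)
  have h2 : Real.exp (-x) ≤ Real.exp |x| := Real.exp_le_exp.2 (neg_le_abs x)
  have h3 := Real.exp_pos x
  have h4 := Real.exp_pos (-x)
  rw [abs_le]; constructor <;> [skip; skip] <;> linarith [abs_nonneg x]

lemma aux_cosh_lower (t : ℝ) : 1 + t ^ 2 / 2 ≤ Real.cosh t := by
  have h : Real.cosh t = 1 + 2 * Real.sinh (t / 2) ^ 2 := by
    have h1 := Real.cosh_two_mul (t / 2)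
    have h2 := Real.cosh_sq (t / 2)
    rw [show 2 * (t / 2) = t by ring] at h1
    rw [h1, h2]; ring
  have h3 : (t / 2) ^ 2 ≤ Real.sinh (t / 2) ^ 2 := by
    rcases le_or_gt 0 t with ht | ht
    · have := Real.self_le_sinh_iff.2 (show (0:ℝ) ≤ t/2 by positivity)
      nlinarith [Real.sinh_nonneg_iff.2 (show (0:ℝ) ≤ t/2 by positivity)]
    · have := Real.self_le_sinh_iff.2 (show (0:ℝ) ≤ -(t/2) by linarith)
      rw [Real.sinh_neg] at this
      nlinarith [Real.sinh_nonpos_iff.2 (show t/2 ≤ 0 by linarith)]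
  nlinarith

lemma exp_bound_key {c y : ℝ} (t : ℝ) (hy : 0 < y) (ht : 0 ≤ t) :
    c * t - y * Real.cosh t ≤ (c + 1) ^ 2 / (2 * y) - t := by
  have h1 := aux_cosh_lower t
  have h2 : 0 ≤ (y * t - (c + 1)) ^ 2 / (2 * y) := by positivity
  have h3 : (c + 1) ^ 2 / (2 * y) - ((y * t - (c+1)) ^ 2) / (2 * y)
      = (c + 1) * t - y * t ^ 2 / 2 := by field_simp; ring
  nlinarith [mul_le_mul_of_nonneg_left h1 hy.le]

lemma integrableOn_exp_mul_sub_cosh (c y : ℝ) (hy : 0 < y) :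
    IntegrableOn (fun t => Real.exp (c * t - y * Real.cosh t)) (Ioi (0:ℝ)) := by
  have hint : IntegrableOn (fun t => Real.exp ((c+1)^2/(2*y)) * Real.exp (-1 * t)) (Ioi (0:ℝ)) :=
    (exp_neg_integrableOn_Ioi 0 one_pos).const_mul _
  refine hint.mono' (Continuous.aestronglyMeasurable (by continuity)) ?_
  filter_upwards [ae_restrict_mem measurableSet_Ioi] with t ht
  rw [Real.norm_eq_abs, abs_of_pos (Real.exp_pos _), ← Real.exp_add]
  exact Real.exp_le_exp.2 (by have := exp_bound_key (c := c) t hy (le_of_lt ht); linarith)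

lemma integrableOn_of_bound {f : ℝ → ℝ} {c y : ℝ} (hy : 0 < y) (hf : Continuous f)
    (h : ∀ t, 0 < t → |f t| ≤ Real.exp (c * t - y * Real.cosh t)) :
    IntegrableOn f (Ioi (0:ℝ)) := by
  refine (integrableOn_exp_mul_sub_cosh c y hy).mono' hf.aestronglyMeasurable ?_
  filter_upwards [ae_restrict_mem measurableSet_Ioi] with t ht
  exact h t ht

lemma besselK_integrableOn (σ y : ℝ) (hy : 0 < y) :
    IntegrableOn (fun t => Real.exp (-(y * Real.cosh t)) * Real.cosh (σ * t)) (Ioi (0:ℝ)) := by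
  apply integrableOn_of_bound (c := |σ|) hy (by continuity)
  intro t ht
  rw [abs_mul, abs_of_pos (Real.exp_pos _), abs_of_pos (Real.cosh_pos _)]
  calc Real.exp (-(y * Real.cosh t)) * Real.cosh (σ * t)
      ≤ Real.exp (-(y * Real.cosh t)) * Real.exp |σ * t| :=
        mul_le_mul_of_nonneg_left (aux_cosh_le _) (Real.exp_pos _).le
    _ = Real.exp (|σ| * t - y * Real.cosh t) := by
        rw [← Real.exp_add, abs_mul, abs_of_pos ht]; ring_nf

lemma coshmul_integrableOn (σ y : ℝ) (hy : 0 < y) :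
    IntegrableOn (fun t => Real.cosh t * Real.exp (-(y * Real.cosh t)) * Real.cosh (σ * t))
      (Ioi (0:ℝ)) := by
  apply integrableOn_of_bound (c := 1 + |σ|) hy (by continuity)
  intro t ht
  rw [abs_mul, abs_mul, abs_of_pos (Real.exp_pos _), abs_of_pos (Real.cosh_pos _),
    abs_of_pos (Real.cosh_pos _)]
  calc Real.cosh t * Real.exp (-(y * Real.cosh t)) * Real.cosh (σ * t)
      ≤ Real.exp |t| * Real.exp (-(y * Real.cosh t)) * Real.exp |σ * t| := by
        apply mul_le_mul (mul_le_mul_of_nonneg_right (aux_cosh_le _) (Real.exp_pos _).le)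
          (aux_cosh_le _) (Real.cosh_pos _).le (by positivity)
    _ = Real.exp ((1 + |σ|) * t - y * Real.cosh t) := by
        rw [← Real.exp_add, ← Real.exp_add, abs_mul, abs_of_pos ht]; ring_nf

lemma sinhmul_integrableOn (σ y : ℝ) (hy : 0 < y) :
    IntegrableOn (fun t => Real.sinh t * Real.exp (-(y * Real.cosh t)) * Real.sinh (σ * t))
      (Ioi (0:ℝ)) := by
  apply integrableOn_of_bound (c := 1 + |σ|) hy (by continuity)
  intro t ht
  rw [abs_mul, abs_mul, abs_of_pos (Real.exp_pos _)]
  calc |Real.sinh t| * Real.exp (-(y * Real.cosh t)) * |Real.sinh (σ * t)|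
      ≤ Real.exp |t| * Real.exp (-(y * Real.cosh t)) * Real.exp |σ * t| := by
        apply mul_le_mul (mul_le_mul_of_nonneg_right (aux_sinh_le _) (Real.exp_pos _).le)
          (aux_sinh_le _) (abs_nonneg _) (by positivity)
    _ = Real.exp ((1 + |σ|) * t - y * Real.cosh t) := by
        rw [← Real.exp_add, ← Real.exp_add, abs_mul, abs_of_pos ht]; ring_nf

lemma besselK_hasDerivAt (σ y : ℝ) (hy : 0 < y) :
    HasDerivAt (fun x => besselK σ x)
      (-((besselK (σ + 1) y + besselK (σ - 1) y) / 2)) y := by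
  have key := hasDerivAt_integral_of_dominated_loc_of_deriv_le (μ := volume.restrict (Ioi 0))
    (F := fun x t => Real.exp (-(x * Real.cosh t)) * Real.cosh (σ * t))
    (F' := fun x t => -(Real.cosh t * Real.exp (-(x * Real.cosh t)) * Real.cosh (σ * t)))
    (x₀ := y) (s := Metric.ball y (y / 2))
    (bound := fun t => Real.cosh t * Real.exp (-(y / 2 * Real.cosh t)) * Real.cosh (σ * t))
    (Metric.ball_mem_nhds y (half_pos hy))
    (Filter.Eventually.of_forall fun x => (Continuous.aestronglyMeasurable (by continuity)))
    (besselK_integrableOn σ y hy)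
    (Continuous.aestronglyMeasurable (by continuity))
    ?_ (coshmul_integrableOn σ (y / 2) (half_pos hy)) ?_
  · have h2 : (∫ t in Ioi (0:ℝ), -(Real.cosh t * Real.exp (-(y * Real.cosh t)) * Real.cosh (σ * t)))
        = -((besselK (σ + 1) y + besselK (σ - 1) y) / 2) := by
      have hptw : ∀ t : ℝ, -(Real.cosh t * Real.exp (-(y * Real.cosh t)) * Real.cosh (σ * t))
          = -(1/2) * (Real.exp (-(y * Real.cosh t)) * Real.cosh ((σ + 1) * t)
            + Real.exp (-(y * Real.cosh t)) * Real.cosh ((σ - 1) * t)) := by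
        intro t
        rw [show (σ + 1) * t = σ * t + t by ring, show (σ - 1) * t = σ * t - t by ring,
          Real.cosh_add, Real.cosh_sub]
        ring
      rw [show (fun t => -(Real.cosh t * Real.exp (-(y * Real.cosh t)) * Real.cosh (σ * t)))
          = fun t => -(1/2) * (Real.exp (-(y * Real.cosh t)) * Real.cosh ((σ + 1) * t)
            + Real.exp (-(y * Real.cosh t)) * Real.cosh ((σ - 1) * t)) from funext hptw,
        integral_const_mul,
        integral_add (besselK_integrableOn (σ+1) y hy) (besselK_integrableOn (σ-1) y hy)]
      rw [besselK, besselK]; ring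
    rw [← h2]
    exact key.2
  · filter_upwards [ae_restrict_mem measurableSet_Ioi] with t ht
    intro x hx
    have hx2 : y / 2 ≤ x := by
      have := abs_lt.1 (mem_ball_iff_norm.1 hx)
      linarith [this.1]
    rw [norm_neg, Real.norm_eq_abs, abs_mul, abs_mul, abs_of_pos (Real.cosh_pos _),
      abs_of_pos (Real.exp_pos _), abs_of_pos (Real.cosh_pos _)]
    have : Real.exp (-(x * Real.cosh t)) ≤ Real.exp (-(y / 2 * Real.cosh t)) := by
      apply Real.exp_le_exp.2
      have := Real.cosh_pos t
      nlinarith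
    exact mul_le_mul_of_nonneg_right
      (mul_le_mul_of_nonneg_left this (Real.cosh_pos _).le) (Real.cosh_pos _).le
  · filter_upwards [ae_restrict_mem measurableSet_Ioi] with t _
    intro x _
    have h1 : HasDerivAt (fun x : ℝ => -(x * Real.cosh t)) (-Real.cosh t) x := by
      simpa using (hasDerivAt_mul_const (Real.cosh t)).fun_neg
    have := (h1.exp).mul_const (Real.cosh (σ * t))
    refine this.congr_deriv ?_
    ring

lemma sinh_integral_eq (σ y : ℝ) (hy : 0 < y) :
    ∫ t in Ioi (0:ℝ), Real.sinh t * Real.exp (-(y * Real.cosh t)) * Real.sinh (σ * t)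
      = σ / y * besselK σ y := by
  set P : ℝ → ℝ := fun t => Real.exp (-(y * Real.cosh t)) * Real.sinh (σ * t) with hP
  set P' : ℝ → ℝ := fun t =>
    -y * (Real.sinh t * Real.exp (-(y * Real.cosh t)) * Real.sinh (σ * t))
      + σ * (Real.exp (-(y * Real.cosh t)) * Real.cosh (σ * t)) with hP'
  have hderiv : ∀ t : ℝ, HasDerivAt P (P' t) t := by
    intro t
    have h1 : HasDerivAt (fun t : ℝ => -(y * Real.cosh t)) (-(y * Real.sinh t)) t := by
      simpa using ((Real.hasDerivAt_cosh t).const_mul y).fun_neg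
    have h2 : HasDerivAt (fun t : ℝ => Real.sinh (σ * t)) (Real.cosh (σ * t) * σ) t := by
      have hmul : HasDerivAt (fun t : ℝ => σ * t) σ t := by
        simpa [mul_comm] using hasDerivAt_mul_const σ (x := t)
      exact hmul.sinh
    have := (h1.exp).fun_mul h2
    refine this.congr_deriv ?_
    simp only [hP']
    ring
  have hint1 := (sinhmul_integrableOn σ y hy).const_mul (-y)
  have hint2 := (besselK_integrableOn σ y hy).const_mul σ
  have hintP' : IntegrableOn P' (Ioi 0) := hint1.add hint2
  have htend : Tendsto P atTop (𝓝 0) := by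
    apply squeeze_zero_norm' (a := fun t => Real.exp ((|σ| + 1) ^ 2 / (2 * y)) * Real.exp (-t))
    · filter_upwards [eventually_ge_atTop (0:ℝ)] with t ht
      rw [Real.norm_eq_abs, abs_mul, abs_of_pos (Real.exp_pos _)]
      calc Real.exp (-(y * Real.cosh t)) * |Real.sinh (σ * t)|
          ≤ Real.exp (-(y * Real.cosh t)) * Real.exp |σ * t| :=
            mul_le_mul_of_nonneg_left (aux_sinh_le _) (Real.exp_pos _).le
        _ = Real.exp (|σ| * t - y * Real.cosh t) := by
            rw [← Real.exp_add, abs_mul, abs_of_nonneg ht]; ring_nf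
        _ ≤ Real.exp ((|σ| + 1) ^ 2 / (2 * y)) * Real.exp (-t) := by
            rw [← Real.exp_add]
            exact Real.exp_le_exp.2 (by linarith [exp_bound_key (c := |σ|) t hy ht])
    · simpa using (Real.tendsto_exp_neg_atTop_nhds_zero).const_mul
        (Real.exp ((|σ| + 1) ^ 2 / (2 * y)))
  have hFTC := MeasureTheory.integral_Ioi_of_hasDerivAt_of_tendsto
    (f := P) (f' := P') (a := 0) (m := 0)
    (hderiv 0).continuousAt.continuousWithinAt (fun x _ => hderiv x) hintP' htend
  have hP0 : P 0 = 0 := by simp [hP]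
  rw [hP0, sub_zero] at hFTC
  have hsplit : ∫ t in Ioi (0:ℝ), P' t
      = -y * (∫ t in Ioi (0:ℝ), Real.sinh t * Real.exp (-(y * Real.cosh t)) * Real.sinh (σ * t))
        + σ * besselK σ y := by
    rw [hP', integral_add hint1 hint2, integral_const_mul, integral_const_mul, besselK]
  rw [hsplit] at hFTC
  field_simp at hFTC ⊢
  linarith [hFTC]

lemma besselK_recurrence (σ y : ℝ) (hy : 0 < y) :
    besselK (σ + 1) y - besselK (σ - 1) y = 2 * σ / y * besselK σ y := by
  have h1 : besselK (σ + 1) y - besselK (σ - 1) y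
      = ∫ t in Ioi (0:ℝ),
          2 * (Real.sinh t * Real.exp (-(y * Real.cosh t)) * Real.sinh (σ * t)) := by
    rw [besselK, besselK,
      ← integral_sub (besselK_integrableOn (σ+1) y hy) (besselK_integrableOn (σ-1) y hy)]
    congr 1; funext t
    rw [show (σ + 1) * t = σ * t + t by ring, show (σ - 1) * t = σ * t - t by ring,
      Real.cosh_add, Real.cosh_sub]
    ring
  rw [h1, integral_const_mul, sinh_integral_eq σ y hy]
  field_simp

lemma hasDerivAt_rpow_besselK (σ y : ℝ) (hy : 0 < y) :
    HasDerivAt (fun x => x ^ σ * besselK σ x) (-(y ^ σ * besselK (σ - 1) y)) y := by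
  have h1 : HasDerivAt (fun x : ℝ => x ^ σ) (σ * y ^ (σ - 1)) y :=
    Real.hasDerivAt_rpow_const (Or.inl hy.ne')
  have h3 := h1.fun_mul (besselK_hasDerivAt σ y hy)
  refine h3.congr_deriv ?_
  have hrec := besselK_recurrence σ y hy
  have hys : y ^ (σ - 1) = y ^ σ / y := by rw [Real.rpow_sub hy, Real.rpow_one]
  have hK : besselK (σ + 1) y = besselK (σ - 1) y + 2 * σ / y * besselK σ y := by linarith
  rw [hK, hys]
  field_simp
  ring

lemma hasDerivAt_rpow_besselK' (σ y : ℝ) (hy : 0 < y) :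
    HasDerivAt (fun x => x ^ σ * besselK (σ - 1) x)
      ((2 * σ - 1) * y ^ (σ - 1) * besselK (σ - 1) y - y ^ σ * besselK σ y) y := by
  have h1 : HasDerivAt (fun x : ℝ => x ^ σ) (σ * y ^ (σ - 1)) y :=
    Real.hasDerivAt_rpow_const (Or.inl hy.ne')
  have h2 := besselK_hasDerivAt (σ - 1) y hy
  rw [show σ - 1 + 1 = σ by ring] at h2
  have h3 := h1.fun_mul h2
  refine h3.congr_deriv ?_
  have hrec := besselK_recurrence (σ - 1) y hy
  rw [show σ - 1 + 1 = σ by ring] at hrec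
  have hys : y ^ (σ - 1) = y ^ σ / y := by rw [Real.rpow_sub hy, Real.rpow_one]
  have hK : besselK (σ - 1 - 1) y = besselK σ y - 2 * (σ - 1) / y * besselK (σ - 1) y := by
    linarith
  rw [hK, hys]
  field_simp
  ring

lemma DLam_congr {f g : ℝ → ℝ} {y : ℝ} (b lam : ℝ) (h : f =ᶠ[𝓝 y] g) :
    DLam b lam f y = DLam b lam g y := by
  unfold DLam
  rw [h.deriv.deriv_eq, h.deriv_eq, h.eq_of_nhds]

lemma DLam_const_mul (b lam c : ℝ) (g : ℝ → ℝ) (y : ℝ) :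
    DLam b lam (fun x => c * g x) y = c * DLam b lam g y := by
  unfold DLam
  have h1 : deriv (fun x => c * g x) = fun x => c * deriv g x :=
    funext fun x => deriv_const_mul_field c
  have h2 : deriv (fun x => c * deriv g x) = fun x => c * deriv (deriv g) x :=
    funext fun x => deriv_const_mul_field c
  rw [h1, h2]
  ring

lemma DLam_core (σ b y : ℝ) (hy : 0 < y) :
    DLam b 1 (fun x => x ^ σ * besselK σ x) y
      = (2 * σ - 1 + b) * (y ^ (σ - 1) * besselK (σ - 1) y) := by
  have hEv : deriv (fun x => x ^ σ * besselK σ x) =ᶠ[𝓝 y]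
      fun x => -(x ^ σ * besselK (σ - 1) x) := by
    filter_upwards [Ioi_mem_nhds hy] with x hx
    exact (hasDerivAt_rpow_besselK σ x hx).deriv
  unfold DLam
  rw [hEv.deriv_eq, hEv.eq_of_nhds]
  rw [deriv.fun_neg, (hasDerivAt_rpow_besselK' σ y hy).deriv]
  have hys : y ^ (σ - 1) = y ^ σ / y := by rw [Real.rpow_sub hy, Real.rpow_one]
  rw [hys]
  field_simp
  ring

lemma DLam_psi (σ b y : ℝ) (hσ : Real.Gamma σ ≠ 0) (hσ1 : Real.Gamma (σ - 1) ≠ 0)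
    (hy : 0 < y) :
    DLam b 1 (psi σ) y
      = (2 * σ - 1 + b) / 2 * (Real.Gamma (σ - 1) / Real.Gamma σ) * psi (σ - 1) y := by
  have hEq : psi σ =ᶠ[𝓝 y]
      fun x => (2 : ℝ) ^ (1 - σ) / Real.Gamma σ * (x ^ σ * besselK σ x) := by
    filter_upwards [Ioi_mem_nhds hy] with x hx
    rw [psi, if_neg (ne_of_gt hx), abs_of_pos hx]; ring
  rw [DLam_congr b 1 hEq, DLam_const_mul, DLam_core σ b y hy]
  rw [psi, if_neg (ne_of_gt hy), abs_of_pos hy]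
  have h2 : (2 : ℝ) ^ (1 - (σ - 1)) = 2 * (2 : ℝ) ^ (1 - σ) := by
    rw [show (1 : ℝ) - (σ - 1) = (1 - σ) + 1 by ring, Real.rpow_add two_pos, Real.rpow_one]
    ring
  rw [h2]
  field_simp


/-- for non-integer `s > 1`, `𝔟 = 1 − 2(s − ⌊s⌋)` and `1 ≤ m ≤ ⌊s⌋`,
`(D_𝔟 + 1)^m ψ_s = (⌊s⌋!/⌊s−m⌋!)·(Γ(s−m)/Γ(s))·ψ_{s−m}` on `(0,∞)`. -/
theorem psi_iterate_eq (s : ℝ) (hs : 1 < s) (hni : ∀ n : ℤ, s ≠ n)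
    (b : ℝ) (hb : b = 1 - 2 * (s - (⌊s⌋₊ : ℝ)))
    (m : ℕ) (hm1 : 1 ≤ m) (hm2 : m ≤ ⌊s⌋₊) :
    ∀ y : ℝ, 0 < y →
      DLamIter b 1 m (psi s) y
        = (Nat.factorial ⌊s⌋₊ : ℝ) / (Nat.factorial ⌊s - (m : ℝ)⌋₊ : ℝ) *
            (Real.Gamma (s - m) / Real.Gamma s) * psi (s - m) y := by
  set L := ⌊s⌋₊ with hL
  have hΓs : Real.Gamma s ≠ 0 := (Real.Gamma_pos_of_pos (by linarith)).ne'
  have hLs : (L : ℝ) < s := by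
    rcases lt_or_eq_of_le (Nat.floor_le (by linarith : (0:ℝ) ≤ s)) with h | h
    · exact h
    · exact absurd h.symm (by exact_mod_cast hni L)
  have main : ∀ k : ℕ, k ≤ L → ∀ y : ℝ, 0 < y →
      DLamIter b 1 k (psi s) y
        = (Nat.factorial L : ℝ) / (Nat.factorial (L - k) : ℝ) *
            (Real.Gamma (s - k) / Real.Gamma s) * psi (s - k) y := by
    intro k
    induction k with
    | zero =>
      intro _ y hy
      simp [DLamIter, div_self hΓs,
        div_self (Nat.cast_ne_zero.2 (Nat.factorial_ne_zero L) : (Nat.factorial L : ℝ) ≠ 0)]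
    | succ n ih =>
      intro hn1 y hy
      have hn : n ≤ L := Nat.le_of_succ_le hn1
      have hnL : (n : ℝ) + 1 ≤ (L : ℝ) := by exact_mod_cast hn1
      have hσ1pos : (0 : ℝ) < s - n - 1 := by linarith
      have hΓσ : Real.Gamma (s - n) ≠ 0 := (Real.Gamma_pos_of_pos (by linarith)).ne'
      have hΓσ1 : Real.Gamma (s - n - 1) ≠ 0 := (Real.Gamma_pos_of_pos hσ1pos).ne'
      have hiter : DLamIter b 1 (n + 1) (psi s) = DLam b 1 (DLamIter b 1 n (psi s)) := by
        unfold DLamIter; rw [Function.iterate_succ_apply']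
      rw [hiter]
      have hEv : DLamIter b 1 n (psi s) =ᶠ[𝓝 y]
          fun x => (Nat.factorial L : ℝ) / (Nat.factorial (L - n) : ℝ) *
            (Real.Gamma (s - n) / Real.Gamma s) * psi (s - n) x := by
        filter_upwards [Ioi_mem_nhds hy] with x hx
        exact ih hn x hx
      rw [DLam_congr b 1 hEv, DLam_const_mul, DLam_psi (s - n) b y hΓσ hΓσ1 hy]
      have hcast : s - ((n : ℕ) + 1 : ℕ) = s - n - 1 := by push_cast; ring
      rw [hcast]
      have hfact : (Nat.factorial (L - n) : ℝ)
          = ((L : ℝ) - n) * (Nat.factorial (L - (n + 1)) : ℝ) := by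
        rw [show L - n = (L - (n + 1)) + 1 by omega, Nat.factorial_succ]
        have : ((L - (n + 1) + 1 : ℕ) : ℝ) = (L : ℝ) - n := by
          have := Nat.cast_sub hn1 (R := ℝ)
          push_cast [this]; ring
        rw [Nat.cast_mul, this]
      have hcoef : (2 * (s - n) - 1 + b) / 2 = (L : ℝ) - n := by rw [hb]; ring
      rw [hcoef, hfact]
      have hLn : ((L : ℝ) - n) ≠ 0 := by linarith
      field_simp
  intro y hy
  have hfloor : ⌊s - (m : ℝ)⌋₊ = L - m := by
    have hmL : (m:ℝ) ≤ L := by exact_mod_cast hm2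
    apply le_antisymm
    · have h1 := Nat.floor_le (by linarith : (0:ℝ) ≤ s - m)
      have : ⌊s - (m:ℝ)⌋₊ + m ≤ L := Nat.le_floor (by push_cast; linarith)
      omega
    · apply Nat.le_floor; rw [Nat.cast_sub hm2]; linarith
  rw [main m hm2 y hy, hfloor]
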